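/- Let p, q, λ₀ ∈ ℝ with p² + q² + λ₀² = 1, and define ε(x,y) = p x + i q y and λ(x,y) = λ₀ on the open set { (x,y) : x > 1, |y| < 1 }. Then ε and λ solve the Ernst equations in prolate spheroidal coordinates: for ζ ∈ {ε, λ}, (1 − |ε|² − |λ|²) [ ∂_x((x²−1)∂_x ζ) + ∂_y((1−y²)∂_y ζ) ] = −2 [ (x²−1)(ε̄ ∂_x ε + λ̄ ∂_x λ) ∂_x ζ + (1−y²)(ε̄ ∂_y ε + λ̄ ∂_y λ) ∂_y ζ ]. -/

import Mathlib

open Complex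

/-- `i`-th partial derivative of a map on `ℝⁿ`. -/
noncomputable def pd {n : ℕ} {E : Type*} [NormedAddCommGroup E] [NormedSpace ℝ E]
    (f : (Fin n → ℝ) → E) (i : Fin n) (x : Fin n → ℝ) : E :=
  fderiv ℝ f x (Pi.single i 1)

/-- The potentials `ε = px + iqy`, `λ = l₀` with `p² + q² + l₀² = 1` solve the Ernst
equations in prolate spheroidal coordinates on `{x > 1, |y| < 1}`. -/
theorem kerr_newman_ernst_solution (p q l₀ : ℝ) (hpq : p ^ 2 + q ^ 2 + l₀ ^ 2 = 1)
    (ε lam : (Fin 2 → ℝ) → ℂ)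
    (hε : ε = fun pt => (p * pt 0 : ℝ) + Complex.I * (q * pt 1 : ℝ))
    (hlam : lam = fun _ => (l₀ : ℂ)) :
    ∀ ζ ∈ ({ε, lam} : Set ((Fin 2 → ℝ) → ℂ)),
      ∀ pt : Fin 2 → ℝ, pt 0 > 1 → |pt 1| < 1 →
        ((1 - Complex.normSq (ε pt) - Complex.normSq (lam pt) : ℝ) : ℂ) *
            (pd (fun w => (((w 0) ^ 2 - 1 : ℝ) : ℂ) * pd ζ 0 w) 0 pt +
              pd (fun w => ((1 - (w 1) ^ 2 : ℝ) : ℂ) * pd ζ 1 w) 1 pt) =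
          -2 * ((((pt 0) ^ 2 - 1 : ℝ) : ℂ) *
                ((starRingEnd ℂ) (ε pt) * pd ε 0 pt +
                  (starRingEnd ℂ) (lam pt) * pd lam 0 pt) * pd ζ 0 pt +
              ((1 - (pt 1) ^ 2 : ℝ) : ℂ) *
                ((starRingEnd ℂ) (ε pt) * pd ε 1 pt +
                  (starRingEnd ℂ) (lam pt) * pd lam 1 pt) * pd ζ 1 pt) := by
  -- derivative of ε
  have hεd : ∀ z : Fin 2 → ℝ, HasFDerivAt ε
      ((p:ℂ) • (Complex.ofRealCLM.comp (ContinuousLinearMap.proj 0)) +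
        (Complex.I * q) • (Complex.ofRealCLM.comp (ContinuousLinearMap.proj 1))) z := by
    intro z
    have h0 := (Complex.ofRealCLM.comp (ContinuousLinearMap.proj (R := ℝ) (φ := fun _ : Fin 2 => ℝ) 0)).hasFDerivAt (x := z)
    have h1 := (Complex.ofRealCLM.comp (ContinuousLinearMap.proj (R := ℝ) (φ := fun _ : Fin 2 => ℝ) 1)).hasFDerivAt (x := z)
    have h := (h0.const_mul (p:ℂ)).add (h1.const_mul (Complex.I * q))
    rw [hε]
    refine h.congr_of_eventuallyEq (Filter.Eventually.of_forall fun w => ?_)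
    simp
    ring
  have pdε0 : ∀ z, pd ε 0 z = (p : ℂ) := by
    intro z
    simp only [pd, (hεd z).fderiv]
    simp [Pi.single_apply]
  have pdε1 : ∀ z, pd ε 1 z = Complex.I * q := by
    intro z
    simp only [pd, (hεd z).fderiv]
    simp [Pi.single_apply]
  have pdlam : ∀ i z, pd lam i z = 0 := by
    intro i z
    simp [pd, hlam]
  -- second derivatives
  have key0 : ∀ (c : ℂ) (z : Fin 2 → ℝ),
      pd (fun w : Fin 2 → ℝ => (((w 0) ^ 2 - 1 : ℝ) : ℂ) * c) 0 z = (2 * z 0 : ℝ) * c := by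
    intro c z
    have hp : HasFDerivAt (fun w : Fin 2 → ℝ => w 0)
        (ContinuousLinearMap.proj (R := ℝ) (φ := fun _ : Fin 2 => ℝ) 0) z :=
      hasFDerivAt_apply 0 z
    have h2 : HasFDerivAt (fun w : Fin 2 → ℝ => w 0 ^ 2 - 1)
        ((z 0 • ContinuousLinearMap.proj 0 + z 0 • ContinuousLinearMap.proj 0 : (Fin 2 → ℝ) →L[ℝ] ℝ)) z := by
      simpa only [← pow_two, Pi.pow_apply] using (hp.mul hp).sub_const 1
    have h3 := (Complex.ofRealCLM.hasFDerivAt (x := (z 0 ^ 2 - 1 : ℝ))).comp z h2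
    have h4 : HasFDerivAt (fun w : Fin 2 → ℝ => (((w 0) ^ 2 - 1 : ℝ) : ℂ) * c)
        (c • Complex.ofRealCLM.comp
          (z 0 • ContinuousLinearMap.proj 0 + z 0 • ContinuousLinearMap.proj 0)) z :=
      h3.mul_const c
    simp only [pd]
    rw [h4.fderiv]
    simp [Pi.single_apply]
    ring
  have key1 : ∀ (c : ℂ) (z : Fin 2 → ℝ),
      pd (fun w : Fin 2 → ℝ => ((1 - (w 1) ^ 2 : ℝ) : ℂ) * c) 1 z = (-(2 * z 1) : ℝ) * c := by
    intro c z
    have hp : HasFDerivAt (fun w : Fin 2 → ℝ => w 1)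
        (ContinuousLinearMap.proj (R := ℝ) (φ := fun _ : Fin 2 => ℝ) 1) z :=
      hasFDerivAt_apply 1 z
    have h2 : HasFDerivAt (fun w : Fin 2 → ℝ => 1 - w 1 ^ 2)
        (-(z 1 • ContinuousLinearMap.proj 1 + z 1 • ContinuousLinearMap.proj 1 : (Fin 2 → ℝ) →L[ℝ] ℝ)) z := by
      simpa only [← pow_two, Pi.pow_apply] using (hp.mul hp).const_sub 1
    have h3 := (Complex.ofRealCLM.hasFDerivAt (x := (1 - z 1 ^ 2 : ℝ))).comp z h2
    have h4 : HasFDerivAt (fun w : Fin 2 → ℝ => ((1 - (w 1) ^ 2 : ℝ) : ℂ) * c)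
        (c • Complex.ofRealCLM.comp
          (-(z 1 • ContinuousLinearMap.proj 1 + z 1 • ContinuousLinearMap.proj 1))) z :=
      h3.mul_const c
    simp only [pd]
    rw [h4.fderiv]
    simp [Pi.single_apply]
    ring
  intro ζ hζ pt hx hy
  have hnorm : (Complex.normSq (ε pt) : ℝ) = (p * pt 0) ^ 2 + (q * pt 1) ^ 2 := by
    rw [hε]
    simp [Complex.normSq_apply]
    ring
  have hnorml : (Complex.normSq (lam pt) : ℝ) = l₀ ^ 2 := by
    rw [hlam]; simp [Complex.normSq_apply]; ring
  have hconj : (starRingEnd ℂ) (ε pt) = ((p * pt 0 : ℝ) : ℂ) - Complex.I * ((q * pt 1 : ℝ) : ℂ) := by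
    rw [hε]
    simp [Complex.ext_iff]
  have hconjl : (starRingEnd ℂ) (lam pt) = (l₀ : ℂ) := by
    rw [hlam]; simp
  have hC : (p:ℂ) ^ 2 + (q:ℂ) ^ 2 + (l₀:ℂ) ^ 2 = 1 := by exact_mod_cast congrArg (Complex.ofReal) hpq
  rcases hζ with hζ | hζ
  · subst hζ
    have e0 : (fun w : Fin 2 → ℝ => (((w 0) ^ 2 - 1 : ℝ) : ℂ) * pd ζ 0 w)
        = fun w : Fin 2 → ℝ => (((w 0) ^ 2 - 1 : ℝ) : ℂ) * (p : ℂ) := by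
      funext w; rw [pdε0 w]
    have e1 : (fun w : Fin 2 → ℝ => ((1 - (w 1) ^ 2 : ℝ) : ℂ) * pd ζ 1 w)
        = fun w : Fin 2 → ℝ => ((1 - (w 1) ^ 2 : ℝ) : ℂ) * (Complex.I * q) := by
      funext w; rw [pdε1 w]
    rw [e0, e1, key0, key1, pdε0, pdε1, pdlam, pdlam, hnorm, hnorml, hconj]
    push_cast
    linear_combination (-2 * ((p:ℂ) * pt 0 - Complex.I * q * pt 1)) * hC +
      (2 * ((p:ℂ) * pt 0 - Complex.I * q * pt 1) * (q:ℂ) ^ 2 * (1 - (pt 1 : ℂ) ^ 2)) * Complex.I_sq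
  · subst hζ
    have e0 : (fun w : Fin 2 → ℝ => (((w 0) ^ 2 - 1 : ℝ) : ℂ) * pd ζ 0 w)
        = fun _ : Fin 2 → ℝ => (0 : ℂ) := by
      funext w; rw [pdlam]; ring
    have e1 : (fun w : Fin 2 → ℝ => ((1 - (w 1) ^ 2 : ℝ) : ℂ) * pd ζ 1 w)
        = fun _ : Fin 2 → ℝ => (0 : ℂ) := by
      funext w; rw [pdlam]; ring
    rw [e0, e1, pdlam, pdlam]
    simp [pd]
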